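/- Let L be a lattice in ℝ^m (a full-rank ℤ-submodule with integral inner products) and let M be a sublattice of L whose determinant (determinant of a Gram matrix of a basis of M) is squarefree. Then M is primitive in L, i.e., M = M* ∩ L, where M* is the dual lattice of M inside M ⊗ ℚ. -/

import Mathlib

open scoped RealInnerProductSpace

private lemma key_sqfree {r : ℕ} (G : Matrix (Fin r) (Fin r) ℤ) (hsym : G.transpose = G)
    (p : ℤ) (hp : Prime p) (x : Fin r → ℤ) (i : Fin r) (hxi : ¬ p ∣ x i)
    (h1 : ∀ j, p ∣ (G.mulVec x) j) (h2 : p^2 ∣ dotProduct x (G.mulVec x)) :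
    p^2 ∣ G.det := by
  classical
  set U : Matrix (Fin r) (Fin r) ℤ := (1 : Matrix (Fin r) (Fin r) ℤ).updateCol i x with hU
  have hdetU : U.det = x i := by rw [hU, ← Matrix.cramer_apply, Matrix.cramer_one]; rfl
  set H : Matrix (Fin r) (Fin r) ℤ := U.transpose * G * U with hH
  have hdetH : H.det = (x i)^2 * G.det := by
    rw [hH, Matrix.det_mul, Matrix.det_mul, Matrix.det_transpose, hdetU]; ring
  have hUcol : ∀ l, U l i = x l := by intro l; simp [hU]
  have hGU : ∀ l, (G * U) l i = (G.mulVec x) l := by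
    intro l
    rw [Matrix.mul_apply]
    simp only [Matrix.mulVec, dotProduct]
    exact Finset.sum_congr rfl fun t _ => by rw [hUcol]
  have hcol : ∀ j, H j i = ∑ l, U l j * (G.mulVec x) l := by
    intro j
    rw [hH, Matrix.mul_assoc, Matrix.mul_apply]
    exact Finset.sum_congr rfl fun l _ => by rw [Matrix.transpose_apply, hGU]
  have hUG : ∀ t, (U.transpose * G) i t = (G.mulVec x) t := by
    intro t
    rw [Matrix.mul_apply]
    simp only [Matrix.transpose_apply, Matrix.mulVec, dotProduct]
    refine Finset.sum_congr rfl fun l _ => ?_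
    rw [hUcol]
    conv_rhs => rw [← hsym]
    simp only [Matrix.transpose_apply]
    ring
  have hrow : ∀ k, H i k = ∑ t, (G.mulVec x) t * U t k := by
    intro k
    rw [hH, Matrix.mul_apply]
    exact Finset.sum_congr rfl fun t _ => by rw [hUG]
  have hcolp : ∀ j, p ∣ H j i := by
    intro j; rw [hcol]
    exact Finset.dvd_sum fun l _ => Dvd.dvd.mul_left (h1 l) _
  have hrowp : ∀ k, p ∣ H i k := by
    intro k; rw [hrow]
    exact Finset.dvd_sum fun t _ => Dvd.dvd.mul_right (h1 t) _
  have hii : p^2 ∣ H i i := by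
    rw [hrow]
    have : ∑ t, (G.mulVec x) t * U t i = dotProduct x (G.mulVec x) := by
      simp only [dotProduct]
      exact Finset.sum_congr rfl fun t _ => by rw [hUcol]; ring
    rw [this]; exact h2
  choose y hy using hcolp
  have hyi : p ∣ y i := by
    have h := hii
    rw [hy i, pow_two] at h
    exact (mul_dvd_mul_iff_left hp.ne_zero).mp h
  have hstep1 : H.det = p * (H.updateCol i y).det := by
    conv_lhs => rw [← Matrix.updateCol_eq_self H i]
    have hcolfun : (fun j => H j i) = p • y := by funext j; simp [hy j]
    rw [hcolfun, Matrix.det_updateCol_smul]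
  set H1 := H.updateCol i y with hH1
  choose z hz using (fun k => show p ∣ H1 i k by
    by_cases hk : k = i
    · subst hk; simpa [hH1, Matrix.updateCol_apply] using hyi
    · simpa [hH1, Matrix.updateCol_apply, hk] using hrowp k)
  have hstep2 : H1.det = p * (H1.updateRow i z).det := by
    conv_lhs => rw [← Matrix.updateRow_eq_self H1 i]
    have : (H1 i) = p • z := by funext k; simp [hz k]
    rw [this, Matrix.det_updateRow_smul]
  have hHfin : H.det = p^2 * (H1.updateRow i z).det := by rw [hstep1, hstep2]; ring
  have hdvd : p^2 ∣ (x i)^2 * G.det := by rw [← hdetH, hHfin]; exact Dvd.intro _ rfl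
  have hcop : IsCoprime (p^2) ((x i)^2) := (IsCoprime.pow (((hp.coprime_iff_not_dvd).2 hxi)))
  exact hcop.dvd_of_dvd_mul_left hdvd

private lemma sqf_dvd (D x : ℤ) (hsf : Squarefree D) (h : ∀ p : ℤ, Prime p → p ∣ D → p ∣ x) : D ∣ x := by
  by_contra hnd
  obtain ⟨e, he⟩ := Int.gcd_dvd_left (a := D) (b := x)
  have hgx : (Int.gcd D x : ℤ) ∣ x := Int.gcd_dvd_right D x
  have hena : e.natAbs ≠ 1 := by
    intro h1
    rcases Int.natAbs_eq_iff.mp h1 with h1 | h1 <;>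
      exact hnd (by rw [he, h1]; simpa using hgx)
  obtain ⟨p, hp, hpe⟩ := Int.exists_prime_and_dvd hena
  have hpD : p ∣ D := he ▸ dvd_mul_of_dvd_right hpe _
  have hpx : p ∣ x := h p hp hpD
  have hpg : p ∣ (Int.gcd D x : ℤ) := Int.dvd_coe_gcd hpD hpx
  have : p * p ∣ D := he ▸ mul_dvd_mul hpg hpe
  exact hp.not_unit (hsf p this)

/-- A sublattice `M` of a lattice `L ⊆ ℝ^m` whose Gram determinant is squarefree is
primitive in `L`: any `u ∈ L` lying in the rational span of `M` with integral inner
products against `M` (i.e. `u ∈ M* ∩ L`) already lies in `M`. -/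
theorem stmt_4 (m r : ℕ) (L M : Submodule ℤ (EuclideanSpace ℝ (Fin m)))
    (hML : M ≤ L)
    (hfull : Submodule.span ℝ (L : Set (EuclideanSpace ℝ (Fin m))) = ⊤)
    (hint : ∀ u ∈ L, ∀ v ∈ L, ∃ k : ℤ, ⟪u, v⟫ = (k : ℝ))
    (b : Module.Basis (Fin r) ℤ M)
    (G : Matrix (Fin r) (Fin r) ℤ)
    (hG : ∀ i j, (G i j : ℝ) =
      ⟪(b i : EuclideanSpace ℝ (Fin m)), (b j : EuclideanSpace ℝ (Fin m))⟫)
    (hsf : Squarefree G.det) :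
    ∀ u ∈ L, u ∈ Submodule.span ℚ (M : Set (EuclideanSpace ℝ (Fin m))) →
      (∀ v ∈ M, ∃ k : ℤ, ⟪u, v⟫ = (k : ℝ)) → u ∈ M := by
  classical
  set E := EuclideanSpace ℝ (Fin m)
  intro u hu hspan hdual
  set v : Fin r → E := fun i => (b i : E) with hv
  set D : ℤ := G.det with hD
  have hD0 : D ≠ 0 := fun h => not_squarefree_zero (h ▸ hsf)
  have hDq0 : (D : ℚ) ≠ 0 := by exact_mod_cast hD0
  -- symmetry of G
  have hGsym : G.transpose = G := by
    ext i j
    rw [Matrix.transpose_apply]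
    have : ((G j i : ℤ) : ℝ) = ((G i j : ℤ) : ℝ) := by
      rw [hG j i, hG i j, real_inner_comm]
    exact_mod_cast this
  have hGji : ∀ i j, G j i = G i j := by
    intro i j; conv_lhs => rw [← hGsym, Matrix.transpose_apply]
  -- u as a rational combination of the basis
  have hspan2 : u ∈ Submodule.span ℚ (Set.range v) := by
    refine Submodule.span_le.mpr ?_ hspan
    intro w hw
    have hw' : w ∈ M := hw
    set wM : ↥M := ⟨w, hw'⟩ with hwM
    have hw2 : w = ∑ i, (b.repr wM i) • v i := by
      calc w = (wM : E) := rfl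
        _ = ((∑ i, (b.repr wM i) • b i : M) : E) := by rw [b.sum_repr wM]
        _ = ∑ i, (b.repr wM i) • v i := by push_cast [hv]; rfl
    rw [SetLike.mem_coe, hw2]
    exact Submodule.sum_mem _ fun i _ =>
      zsmul_mem (Submodule.subset_span (Set.mem_range_self i)) _
  obtain ⟨c, hc⟩ := (Submodule.mem_span_range_iff_exists_fun ℚ).mp hspan2
  have hqsmul : ∀ (q : ℚ) (w : E), q • w = (q : ℝ) • w := by
    intro q w
    have := ratCast_smul_eq ℚ ℝ q w
    simpa using this
  have hureal : u = ∑ i, ((c i : ℝ)) • v i := by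
    rw [← hc]
    exact Finset.sum_congr rfl fun i _ => hqsmul (c i) (v i)
  -- integral inner products with the basis
  choose k hk using fun j => hdual (b j) (b j).2
  have hkq : ∀ j, ∑ i, c i * (G i j : ℚ) = (k j : ℚ) := by
    intro j
    have hreal : ∑ i, (c i : ℝ) * (G i j : ℝ) = (k j : ℝ) := by
      rw [← hk j]
      conv_rhs => rw [hureal]
      rw [sum_inner]
      exact Finset.sum_congr rfl fun i _ => by
        rw [real_inner_smul_left, hG i j]
    exact_mod_cast hreal
  -- the norm of u is an integer
  obtain ⟨n, hn⟩ := hint u hu u hu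
  have hnq : ∑ j, c j * (k j : ℚ) = (n : ℚ) := by
    have hreal : ∑ j, (c j : ℝ) * (k j : ℝ) = (n : ℝ) := by
      rw [← hn]
      have h2 : (⟪u, u⟫ : ℝ) = ∑ j, (c j : ℝ) * ⟪u, v j⟫ := by
        nth_rewrite 2 [hureal]
        rw [inner_sum]
        exact Finset.sum_congr rfl fun j _ => real_inner_smul_right ..
      rw [h2]
      exact Finset.sum_congr rfl fun j _ => by rw [hk j]
    exact_mod_cast hreal
  -- rational matrix versions
  set Gq : Matrix (Fin r) (Fin r) ℚ := G.map (Int.cast : ℤ → ℚ) with hGq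
  set kq : Fin r → ℚ := fun j => (k j : ℚ) with hkqdef
  have hGc : Gq.mulVec c = kq := by
    funext j
    rw [hkqdef]
    dsimp only
    rw [← hkq j]
    simp only [Matrix.mulVec, dotProduct, hGq, Matrix.map_apply]
    exact Finset.sum_congr rfl fun i _ => by rw [hGji i j]; ring
  -- the adjugate vector
  set a : Fin r → ℤ := G.adjugate.mulVec k with ha
  have haq : ∀ i, (a i : ℚ) = (D : ℚ) * c i := by
    have hfun : (fun i => (a i : ℚ)) = Gq.adjugate.mulVec kq := by
      have hadj : Gq.adjugate = G.adjugate.map (Int.cast : ℤ → ℚ) :=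
        (RingHom.map_adjugate (Int.castRingHom ℚ) G).symm
      funext i
      rw [hadj]
      simp [ha, Matrix.mulVec, dotProduct, hkqdef]
    intro i
    have := congrFun hfun i
    rw [this, ← hGc, Matrix.mulVec_mulVec, Matrix.adjugate_mul,
      Matrix.smul_mulVec, Matrix.one_mulVec]
    have hdet : Gq.det = (D : ℚ) := by
      rw [hGq, hD]; exact (RingHom.map_det (Int.castRingHom ℚ) G).symm
    rw [Pi.smul_apply, hdet, smul_eq_mul]
  have hGa : G.mulVec a = D • k := by
    rw [ha, Matrix.mulVec_mulVec, Matrix.mul_adjugate, Matrix.smul_mulVec,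
      Matrix.one_mulVec, hD]
  have hak : dotProduct a k = D * n := by
    have hq : ((dotProduct a k : ℤ) : ℚ) = ((D * n : ℤ) : ℚ) := by
      push_cast
      simp only [dotProduct]
      push_cast
      rw [← hnq, Finset.mul_sum]
      exact Finset.sum_congr rfl fun i _ => by rw [haq i]; ring
    exact_mod_cast hq
  have hquad : dotProduct a (G.mulVec a) = D^2 * n := by
    rw [hGa, dotProduct_smul, smul_eq_mul, hak]; ring
  -- divisibility of a by D
  have hdvdall : ∀ p : ℤ, Prime p → p ∣ D → ∀ i, p ∣ a i := by
    intro p hp hpD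
    by_contra hcon
    push_neg at hcon
    obtain ⟨i, hi⟩ := hcon
    have h1 : ∀ j, p ∣ (G.mulVec a) j := by
      intro j; rw [hGa, Pi.smul_apply, smul_eq_mul]
      exact hpD.mul_right _
    have h2 : p^2 ∣ dotProduct a (G.mulVec a) := by
      rw [hquad]
      exact Dvd.dvd.mul_right (pow_dvd_pow_of_dvd hpD 2) _
    have := key_sqfree G hGsym p hp a i hi h1 h2
    rw [pow_two] at this
    exact hp.not_unit (hsf p (hD ▸ this))
  have hDa : ∀ i, D ∣ a i := fun i =>
    sqf_dvd D (a i) (hD ▸ hsf) fun p hp hpD => hdvdall p hp hpD i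
  choose e he using hDa
  have hce : ∀ i, c i = (e i : ℚ) := by
    intro i
    have h1 : (D : ℚ) * c i = (D : ℚ) * (e i : ℚ) := by
      rw [← haq i, he i]; push_cast; ring
    exact mul_left_cancel₀ hDq0 h1
  rw [← hc]
  refine Submodule.sum_mem _ fun i _ => ?_
  rw [hce i, Int.cast_smul_eq_zsmul]
  exact Submodule.smul_mem _ _ (b i).2
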